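/- Let C ⊆ ℝ^n be a nonempty bounded set and fix μ₀ > 0. Then there exists a constant K ≥ 0 such that for every μ ∈ [μ₀, ∞), every x ∈ C at which V_μ is (Fréchet) differentiable satisfies ‖∇V_μ(x)‖ ≤ (K + μ)‖x − p_μ(x)‖. -/

import Mathlib

open Metric Filter Topology Set
open scoped RealInnerProductSpace

private lemma quad_root_bound {r A B : ℝ} (hr : 0 ≤ r) (hA : 0 ≤ A) (hB : 0 ≤ B)
    (h : r ^ 2 ≤ A + B * r) : r ≤ A + B + 1 := by nlinarith

/-- convex continuous function has a linear lower bound -/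
private lemma convex_linear_lower {m : ℕ} {g : EuclideanSpace ℝ (Fin m) → ℝ}
    (hg : ConvexOn ℝ Set.univ g) {B : ℝ} (hB : 0 ≤ B)
    (hBb : ∀ w ∈ Metric.closedBall (0 : EuclideanSpace ℝ (Fin m)) 1, ‖g w‖ ≤ B)
    (w : EuclideanSpace ℝ (Fin m)) : -(3 * B) * (1 + ‖w‖) ≤ g w := by
  by_cases hw : ‖w‖ ≤ 1
  · have h1 : |g w| ≤ B := by
      simpa [Real.norm_eq_abs] using hBb w (by simpa [mem_closedBall, dist_zero_right] using hw)
    have := (abs_le.mp h1).1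
    nlinarith [norm_nonneg w]
  · push_neg at hw
    set t := ‖w‖ with ht
    have ht0 : (0 : ℝ) < t := lt_trans one_pos hw
    have htinv : t * t⁻¹ = 1 := mul_inv_cancel₀ ht0.ne'
    have hinv1 : t⁻¹ ≤ 1 := by
      rw [inv_le_one_iff₀]; right; exact hw.le
    have e1 : g (t⁻¹ • w) ≤ t⁻¹ * g w + (1 - t⁻¹) * g 0 := by
      have := hg.2 (Set.mem_univ w) (Set.mem_univ (0 : EuclideanSpace ℝ (Fin m)))
        (show (0:ℝ) ≤ t⁻¹ by positivity) (show (0:ℝ) ≤ 1 - t⁻¹ by linarith)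
        (show t⁻¹ + (1 - t⁻¹) = 1 by ring)
      simpa using this
    have hu : |g (t⁻¹ • w)| ≤ B := by
      have hmem : t⁻¹ • w ∈ Metric.closedBall (0 : EuclideanSpace ℝ (Fin m)) 1 := by
        simp only [mem_closedBall, dist_zero_right, norm_smul, Real.norm_eq_abs,
          abs_of_pos (inv_pos.mpr ht0)]
        rw [← ht, inv_mul_cancel₀ ht0.ne']
      simpa [Real.norm_eq_abs] using hBb _ hmem
    have h0 : |g 0| ≤ B := by
      simpa [Real.norm_eq_abs] using hBb 0 (by simp)
    have e2 : t * g (t⁻¹ • w) ≤ g w + (t - 1) * g 0 := by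
      have h3 := mul_le_mul_of_nonneg_left e1 ht0.le
      calc t * g (t⁻¹ • w) ≤ t * (t⁻¹ * g w + (1 - t⁻¹) * g 0) := h3
        _ = (t * t⁻¹) * g w + (t * 1 - t * t⁻¹) * g 0 := by ring
        _ = g w + (t - 1) * g 0 := by rw [htinv]; ring
    have hu1 := (abs_le.mp hu).1
    have h01 := (abs_le.mp h0).1
    have h02 := (abs_le.mp h0).2
    nlinarith [mul_le_mul_of_nonneg_left hu1 ht0.le]

set_option maxHeartbeats 1000000 in
theorem stmt_15 {n m : ℕ}
    (F : EuclideanSpace ℝ (Fin n) → EuclideanSpace ℝ (Fin m))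
    (g : EuclideanSpace ℝ (Fin m) → ℝ)
    (D : Set (EuclideanSpace ℝ (Fin n)))
    (hF : ContDiff ℝ 2 F)
    (hg : ConvexOn ℝ Set.univ g) (hgc : Continuous g)
    (hDne : D.Nonempty) (hDcl : IsClosed D) (hDcv : Convex ℝ D)
    (p : ℝ → EuclideanSpace ℝ (Fin n) → EuclideanSpace ℝ (Fin n))
    (V : ℝ → EuclideanSpace ℝ (Fin n) → ℝ)
    (hp : ∀ μ, 0 < μ → ∀ x, p μ x ∈ D ∧ ∀ z ∈ D,
      g (F x + fderiv ℝ F x (p μ x - x)) + μ / 2 * ‖p μ x - x‖ ^ 2 ≤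
      g (F x + fderiv ℝ F x (z - x)) + μ / 2 * ‖z - x‖ ^ 2)
    (hV : ∀ μ, 0 < μ → ∀ x,
      V μ x = g (F x + fderiv ℝ F x (p μ x - x)) + μ / 2 * ‖p μ x - x‖ ^ 2)
    (C : Set (EuclideanSpace ℝ (Fin n))) (hCne : C.Nonempty)
    (hCbd : Bornology.IsBounded C) (μ₀ : ℝ) (hμ₀ : 0 < μ₀) :
    ∃ K ≥ (0 : ℝ), ∀ μ, μ₀ ≤ μ → ∀ x ∈ C, DifferentiableAt ℝ (V μ) x →
      ‖gradient (V μ) x‖ ≤ (K + μ) * ‖x - p μ x‖ := by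
  classical
  obtain ⟨d₀, hd₀⟩ := hDne
  obtain ⟨x₀, hx₀⟩ := hCne
  obtain ⟨RC, hRC⟩ := hCbd.subset_closedBall 0
  have hRC0 : 0 ≤ RC := (norm_nonneg x₀).trans (by simpa [mem_closedBall, dist_zero_right] using hRC hx₀)
  have hScp : IsCompact (Metric.closedBall (0 : EuclideanSpace ℝ (Fin n)) RC) :=
    isCompact_closedBall _ _
  -- smoothness data
  have hF'cd : ContDiff ℝ 1 (fderiv ℝ F) := hF.fderiv_right (by norm_num)
  have hFdiff : Differentiable ℝ F := hF.differentiable (by norm_num)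
  have hF'diff : Differentiable ℝ (fderiv ℝ F) := hF'cd.differentiable (by norm_num)
  have hF''c : Continuous (fderiv ℝ (fderiv ℝ F)) := hF'cd.continuous_fderiv (by norm_num)
  -- bounds on F and its derivatives over the ball of radius RC
  obtain ⟨a₀, ha₀⟩ := hScp.exists_bound_of_continuousOn hF.continuous.continuousOn
  obtain ⟨b₀, hb₀⟩ := hScp.exists_bound_of_continuousOn hF'cd.continuous.continuousOn
  obtain ⟨M₀, hM₀⟩ := hScp.exists_bound_of_continuousOn (f := fderiv ℝ (fderiv ℝ F)) hF''c.continuousOn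
  set a := max a₀ 0 with ha_def
  set b := max b₀ 0 with hb_def
  set M := max M₀ 0 with hM_def
  have ha0 : 0 ≤ a := le_max_right _ _
  have hb0 : 0 ≤ b := le_max_right _ _
  have hM0 : 0 ≤ M := le_max_right _ _
  have haF : ∀ x ∈ C, ‖F x‖ ≤ a := fun x hx => (ha₀ x (hRC hx)).trans (le_max_left _ _)
  have hbF : ∀ x ∈ C, ‖fderiv ℝ F x‖ ≤ b := fun x hx => (hb₀ x (hRC hx)).trans (le_max_left _ _)
  have hMF : ∀ x ∈ C, ‖fderiv ℝ (fderiv ℝ F) x‖ ≤ M :=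
    fun x hx => (hM₀ x (hRC hx)).trans (le_max_left _ _)
  -- bound on g near 0
  obtain ⟨B₀, hB₀⟩ := (isCompact_closedBall (0 : EuclideanSpace ℝ (Fin m)) 1).exists_bound_of_continuousOn hgc.continuousOn
  set B := max B₀ 0 with hB_def
  have hB0 : 0 ≤ B := le_max_right _ _
  have hBb : ∀ w ∈ Metric.closedBall (0 : EuclideanSpace ℝ (Fin m)) 1, ‖g w‖ ≤ B :=
    fun w hw => (hB₀ w hw).trans (le_max_left _ _)
  have hglow := convex_linear_lower hg hB0 hBb
  -- constants for the uniform bound on ‖p μ x - x‖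
  set c := ‖d₀‖ + RC with hc_def
  have hc0 : 0 ≤ c := add_nonneg (norm_nonneg _) hRC0
  obtain ⟨G₀, hG₀⟩ := (isCompact_closedBall (0 : EuclideanSpace ℝ (Fin m)) (a + b * c)).exists_bound_of_continuousOn hgc.continuousOn
  set G₁ := max G₀ 0 with hG₁_def
  have hG₁0 : 0 ≤ G₁ := le_max_right _ _
  set A₁ := c ^ 2 + 2 / μ₀ * (3 * B * (1 + a) + G₁) with hA₁_def
  set B₁ := 2 / μ₀ * (3 * B * b) with hB₁_def
  have hA₁0 : 0 ≤ A₁ := by positivity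
  have hB₁0 : 0 ≤ B₁ := by positivity
  set ρ := max c (A₁ + B₁ + 1) with hρ_def
  have hρ0 : 0 ≤ ρ := le_trans hc0 (le_max_left _ _)
  -- uniform bound on ‖p μ x - x‖
  have hρbound : ∀ μ, μ₀ ≤ μ → ∀ x ∈ C, ‖p μ x - x‖ ≤ ρ := by
    intro μ hμ x hx
    have hμpos : 0 < μ := lt_of_lt_of_le hμ₀ hμ
    have hxn : ‖x‖ ≤ RC := by simpa [mem_closedBall, dist_zero_right] using hRC hx
    set r := ‖p μ x - x‖ with hr_def
    have hr0 : 0 ≤ r := norm_nonneg _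
    by_cases hrc : r ≤ c
    · exact hrc.trans (le_max_left _ _)
    push_neg at hrc
    have hmin := (hp μ hμpos x).2 d₀ hd₀
    have hdx : ‖d₀ - x‖ ≤ c := (norm_sub_le _ _).trans (by rw [hc_def]; linarith)
    have hw₀ : ‖F x + fderiv ℝ F x (d₀ - x)‖ ≤ a + b * c := by
      calc ‖F x + fderiv ℝ F x (d₀ - x)‖ ≤ ‖F x‖ + ‖fderiv ℝ F x (d₀ - x)‖ := norm_add_le _ _
        _ ≤ a + b * c := by
            refine add_le_add (haF x hx) ?_
            calc ‖fderiv ℝ F x (d₀ - x)‖ ≤ ‖fderiv ℝ F x‖ * ‖d₀ - x‖ :=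
                  (fderiv ℝ F x).le_opNorm _
              _ ≤ b * c := mul_le_mul (hbF x hx) hdx (norm_nonneg _) hb0
    have hgw₀ : g (F x + fderiv ℝ F x (d₀ - x)) ≤ G₁ := by
      have := hG₀ (F x + fderiv ℝ F x (d₀ - x))
        (by rw [mem_closedBall, dist_zero_right]; exact hw₀)
      calc g (F x + fderiv ℝ F x (d₀ - x)) ≤ ‖g (F x + fderiv ℝ F x (d₀ - x))‖ :=
            le_abs_self _
        _ ≤ G₁ := this.trans (le_max_left _ _)
    have hGxn : ‖F x + fderiv ℝ F x (p μ x - x)‖ ≤ a + b * r := by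
      calc ‖F x + fderiv ℝ F x (p μ x - x)‖ ≤ ‖F x‖ + ‖fderiv ℝ F x (p μ x - x)‖ :=
            norm_add_le _ _
        _ ≤ a + b * r := by
            refine add_le_add (haF x hx) ?_
            calc ‖fderiv ℝ F x (p μ x - x)‖ ≤ ‖fderiv ℝ F x‖ * ‖p μ x - x‖ :=
                  (fderiv ℝ F x).le_opNorm _
              _ ≤ b * r := mul_le_mul_of_nonneg_right (hbF x hx) hr0
    have hggx : -(3 * B) * (1 + (a + b * r)) ≤ g (F x + fderiv ℝ F x (p μ x - x)) := by
      have h1 := hglow (F x + fderiv ℝ F x (p μ x - x))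
      nlinarith
    -- combine
    have hquad : r ^ 2 ≤ A₁ + B₁ * r := by
      have h1 : μ / 2 * r ^ 2 ≤ G₁ + μ / 2 * c ^ 2 + 3 * B * (1 + (a + b * r)) := by
        have h2 : μ / 2 * ‖d₀ - x‖ ^ 2 ≤ μ / 2 * c ^ 2 := by
          have := pow_le_pow_left₀ (norm_nonneg _) hdx 2
          nlinarith
        nlinarith
      have h3 : μ₀ / 2 * (r ^ 2 - c ^ 2) ≤ μ / 2 * (r ^ 2 - c ^ 2) := by
        have : c ^ 2 ≤ r ^ 2 := by nlinarith
        nlinarith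
      have h4 : μ₀ / 2 * (r ^ 2 - c ^ 2) ≤ G₁ + 3 * B * (1 + a) + 3 * B * b * r := by
        nlinarith
      have h5 : r ^ 2 - c ^ 2 ≤ 2 / μ₀ * (3 * B * (1 + a) + G₁) + B₁ * r := by
        have h6 := mul_le_mul_of_nonneg_left h4
          (le_of_lt (show (0:ℝ) < 2 / μ₀ by positivity))
        calc r ^ 2 - c ^ 2 = 2 / μ₀ * (μ₀ / 2 * (r ^ 2 - c ^ 2)) := by
              field_simp
          _ ≤ 2 / μ₀ * (G₁ + 3 * B * (1 + a) + 3 * B * b * r) := h6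
          _ = 2 / μ₀ * (3 * B * (1 + a) + G₁) + 2 / μ₀ * (3 * B * b) * r := by ring
          _ = 2 / μ₀ * (3 * B * (1 + a) + G₁) + B₁ * r := by rw [hB₁_def]
      rw [hA₁_def]
      linarith
    exact (quad_root_bound hr0 hA₁0 hB₁0 hquad).trans (le_max_right _ _)
  -- Lipschitz constant for g on the relevant ball
  set r₁ := a + b * ρ with hr₁_def
  have hr₁0 : 0 ≤ r₁ := by positivity
  have hgcv : ConvexOn ℝ (Metric.ball (0 : EuclideanSpace ℝ (Fin m)) (r₁ + 2)) g :=
    hg.subset (Set.subset_univ _) (convex_ball _ _)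
  have hbd : Bornology.IsBounded (g '' Metric.ball (0 : EuclideanSpace ℝ (Fin m)) (r₁ + 2)) := by
    refine Bornology.IsBounded.subset ?_ (Set.image_mono ball_subset_closedBall)
    exact ((isCompact_closedBall _ _).image hgc).isBounded
  obtain ⟨L, hL⟩ := hgcv.exists_lipschitzOnWith_of_isBounded
    (show r₁ + 1 < r₁ + 2 by linarith) hbd
  refine ⟨(L : ℝ) * M, by positivity, ?_⟩
  intro μ hμ x hx hdiff
  have hμpos : 0 < μ := lt_of_lt_of_le hμ₀ hμ
  set q := p μ x with hq_def
  set v := gradient (V μ) x with hv_def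
  have hK0 : 0 ≤ (L : ℝ) * M := by positivity
  have hrρ : ‖q - x‖ ≤ ρ := hρbound μ hμ x hx
  by_cases hv0 : v = 0
  · rw [hv0, norm_zero]
    exact mul_nonneg (by positivity) (norm_nonneg _)
  -- the auxiliary function G
  set G : EuclideanSpace ℝ (Fin n) → EuclideanSpace ℝ (Fin m) :=
    fun y => F y + (fderiv ℝ F y) (q - y) with hG_def
  have hGx_eq : V μ x = g (G x) + μ / 2 * ‖q - x‖ ^ 2 := hV μ hμpos x
  have hupper : ∀ y, V μ y ≤ g (G y) + μ / 2 * ‖q - y‖ ^ 2 := by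
    intro y
    rw [hV μ hμpos y]
    exact (hp μ hμpos y).2 q (hp μ hμpos x).1
  -- derivative of G at x
  set W : EuclideanSpace ℝ (Fin n) →L[ℝ] EuclideanSpace ℝ (Fin m) :=
    (fderiv ℝ (fderiv ℝ F) x).flip (q - x) with hW_def
  have hGder : HasFDerivAt G W x := by
    have h1 := (hF'diff x).hasFDerivAt.clm_apply
      ((hasFDerivAt_const q x).sub (hasFDerivAt_id x))
    have h2 := (hFdiff x).hasFDerivAt.add h1
    refine h2.congr_fderiv ?_
    ext u
    simp [hW_def, ContinuousLinearMap.flip_apply, map_sub]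
  have hWv : ‖W v‖ ≤ M * ‖x - q‖ * ‖v‖ := by
    have h1 : W v = (fderiv ℝ (fderiv ℝ F) x v) (q - x) := rfl
    rw [h1]
    calc ‖(fderiv ℝ (fderiv ℝ F) x v) (q - x)‖
        ≤ ‖fderiv ℝ (fderiv ℝ F) x v‖ * ‖q - x‖ := ContinuousLinearMap.le_opNorm _ _
      _ ≤ (‖fderiv ℝ (fderiv ℝ F) x‖ * ‖v‖) * ‖q - x‖ :=
          mul_le_mul_of_nonneg_right (ContinuousLinearMap.le_opNorm _ _) (norm_nonneg _)
      _ ≤ (M * ‖v‖) * ‖q - x‖ := by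
          refine mul_le_mul_of_nonneg_right
            (mul_le_mul_of_nonneg_right (hMF x hx) (norm_nonneg _)) (norm_nonneg _)
      _ = M * ‖x - q‖ * ‖v‖ := by rw [norm_sub_rev]; ring
  -- the line through x in direction v
  have hline : HasDerivAt (fun t : ℝ => x + t • v) v 0 := by
    simpa using ((hasDerivAt_id (0 : ℝ)).smul_const v).const_add x
  have hx0 : x + (0 : ℝ) • v = x := by simp
  have hVcurve : HasDerivAt (fun t : ℝ => V μ (x + t • v)) (fderiv ℝ (V μ) x v) 0 := by
    have h1 : HasFDerivAt (V μ) (fderiv ℝ (V μ) x) (x + (0 : ℝ) • v) := by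
      rw [hx0]; exact hdiff.hasFDerivAt
    exact h1.comp_hasDerivAt 0 hline
  have hGcurve : HasDerivAt (fun t : ℝ => G (x + t • v)) (W v) 0 := by
    have h1 : HasFDerivAt G W (x + (0 : ℝ) • v) := by rw [hx0]; exact hGder
    exact h1.comp_hasDerivAt 0 hline
  -- slope convergence
  have hsub : 𝓝[>] (0 : ℝ) ≤ 𝓝[≠] (0 : ℝ) :=
    nhdsWithin_mono 0 (fun t ht => ne_of_gt ht)
  have hVt : Tendsto (slope (fun t : ℝ => V μ (x + t • v)) 0) (𝓝[>] 0)
      (𝓝 (fderiv ℝ (V μ) x v)) :=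
    (hasDerivAt_iff_tendsto_slope.mp hVcurve).mono_left hsub
  have hGt : Tendsto (slope (fun t : ℝ => G (x + t • v)) 0) (𝓝[>] 0) (𝓝 (W v)) :=
    (hasDerivAt_iff_tendsto_slope.mp hGcurve).mono_left hsub
  have hBt : Tendsto (fun t : ℝ => (L : ℝ) * ‖slope (fun s : ℝ => G (x + s • v)) 0 t‖ +
      (μ * ⟪x - q, v⟫ + μ / 2 * t * ‖v‖ ^ 2)) (𝓝[>] 0)
      (𝓝 ((L : ℝ) * ‖W v‖ + (μ * ⟪x - q, v⟫ + μ / 2 * 0 * ‖v‖ ^ 2))) := by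
    refine Tendsto.add (Tendsto.const_mul _ (hGt.norm)) ?_
    refine Tendsto.const_add _ ?_
    have : Continuous fun t : ℝ => μ / 2 * t * ‖v‖ ^ 2 :=
      (continuous_const.mul continuous_id).mul continuous_const
    exact (this.tendsto 0).mono_left nhdsWithin_le_nhds
  -- the eventual inequality
  have hGxball : G x ∈ Metric.ball (0 : EuclideanSpace ℝ (Fin m)) (r₁ + 1) := by
    have hGxn : ‖G x‖ ≤ a + b * ‖q - x‖ := by
      calc ‖G x‖ ≤ ‖F x‖ + ‖fderiv ℝ F x (q - x)‖ := norm_add_le _ _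
        _ ≤ a + b * ‖q - x‖ := by
            refine add_le_add (haF x hx) ?_
            calc ‖fderiv ℝ F x (q - x)‖ ≤ ‖fderiv ℝ F x‖ * ‖q - x‖ :=
                  (fderiv ℝ F x).le_opNorm _
              _ ≤ b * ‖q - x‖ := mul_le_mul_of_nonneg_right (hbF x hx) (norm_nonneg _)
    have : ‖G x‖ ≤ r₁ := hGxn.trans
      (by rw [hr₁_def]; exact add_le_add_right (mul_le_mul_of_nonneg_left hrρ hb0) a)
    simp only [mem_ball, dist_zero_right]
    linarith
  have hev1 : ∀ᶠ t : ℝ in 𝓝[>] 0, G (x + t • v) ∈ Metric.ball (0 : EuclideanSpace ℝ (Fin m)) (r₁ + 1) := by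
    have hcont : Tendsto (fun t : ℝ => G (x + t • v)) (𝓝 0) (𝓝 (G x)) := by
      have := hGcurve.continuousAt.tendsto
      simpa [hx0] using this
    exact (hcont.eventually (isOpen_ball.mem_nhds hGxball)).filter_mono nhdsWithin_le_nhds
  have hle : ∀ᶠ t : ℝ in 𝓝[>] 0,
      slope (fun s : ℝ => V μ (x + s • v)) 0 t ≤
      (L : ℝ) * ‖slope (fun s : ℝ => G (x + s • v)) 0 t‖ +
      (μ * ⟪x - q, v⟫ + μ / 2 * t * ‖v‖ ^ 2) := by
    filter_upwards [hev1, self_mem_nhdsWithin] with t hGm ht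
    have ht0 : (0 : ℝ) < t := ht
    have ht' : t ≠ 0 := ht0.ne'
    have e1 : V μ (x + t • v) - V μ x ≤
        g (G (x + t • v)) - g (G x) + μ / 2 * (‖q - (x + t • v)‖ ^ 2 - ‖q - x‖ ^ 2) := by
      have h1 := hupper (x + t • v)
      rw [hGx_eq]
      linarith
    have e2 : g (G (x + t • v)) - g (G x) ≤ (L : ℝ) * ‖G (x + t • v) - G x‖ := by
      have h1 := hL.dist_le_mul _ hGm _ hGxball
      have h2 : |g (G (x + t • v)) - g (G x)| ≤ (L : ℝ) * ‖G (x + t • v) - G x‖ := by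
        rw [← Real.dist_eq, ← dist_eq_norm]
        exact h1
      exact (le_abs_self _).trans h2
    have e3 : ‖q - (x + t • v)‖ ^ 2 - ‖q - x‖ ^ 2 =
        2 * t * ⟪x - q, v⟫ + t ^ 2 * ‖v‖ ^ 2 := by
      have h1 : q - (x + t • v) = (q - x) - t • v := by abel
      rw [h1, norm_sub_sq_real, real_inner_smul_right, norm_smul]
      have h2 : ⟪x - q, v⟫ = -⟪q - x, v⟫ := by
        rw [show x - q = -(q - x) by abel, inner_neg_left]
      rw [h2]
      simp only [Real.norm_eq_abs, abs_of_pos ht0, mul_pow]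
      ring
    -- now divide by t
    have hslopeV : slope (fun s : ℝ => V μ (x + s • v)) 0 t =
        (V μ (x + t • v) - V μ x) / t := by
      simp only [slope_def_field, zero_smul, add_zero, sub_zero]
    have hslopeG : ‖slope (fun s : ℝ => G (x + s • v)) 0 t‖ =
        ‖G (x + t • v) - G x‖ / t := by
      rw [slope]
      simp only [vsub_eq_sub, sub_zero, zero_smul, add_zero, norm_smul, Real.norm_eq_abs,
        abs_inv, abs_of_pos ht0]
      rw [div_eq_inv_mul]
    rw [hslopeV, hslopeG, div_le_iff₀ ht0]
    calc V μ (x + t • v) - V μ x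
        ≤ (L : ℝ) * ‖G (x + t • v) - G x‖ +
            μ / 2 * (2 * t * ⟪x - q, v⟫ + t ^ 2 * ‖v‖ ^ 2) := by
          rw [← e3]; linarith
      _ = ((L : ℝ) * (‖G (x + t • v) - G x‖ / t) +
            (μ * ⟪x - q, v⟫ + μ / 2 * t * ‖v‖ ^ 2)) * t := by
          have hdm : t * t⁻¹ = 1 := mul_inv_cancel₀ ht'
          linear_combination (-(L : ℝ) * ‖G (x + t • v) - G x‖) * hdm
  -- pass to the limit
  have hfinal : fderiv ℝ (V μ) x v ≤
      (L : ℝ) * ‖W v‖ + (μ * ⟪x - q, v⟫ + μ / 2 * 0 * ‖v‖ ^ 2) :=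
    le_of_tendsto_of_tendsto hVt hBt hle
  -- identify fderiv applied to the gradient
  have hfg : fderiv ℝ (V μ) x v = ‖v‖ ^ 2 := by
    have h1 : HasFDerivAt (V μ) (InnerProductSpace.toDual ℝ _ v) x :=
      hdiff.hasGradientAt.hasFDerivAt
    have h2 : fderiv ℝ (V μ) x = InnerProductSpace.toDual ℝ _ v :=
      h1.fderiv
    rw [h2]
    rw [InnerProductSpace.toDual_apply_apply]
    exact real_inner_self_eq_norm_sq v
  rw [hfg] at hfinal
  have hinner : ⟪x - q, v⟫ ≤ ‖x - q‖ * ‖v‖ := real_inner_le_norm _ _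
  have hchain : ‖v‖ ^ 2 ≤ ((L : ℝ) * M + μ) * ‖x - q‖ * ‖v‖ := by
    have h3 : (L : ℝ) * ‖W v‖ ≤ (L : ℝ) * (M * ‖x - q‖ * ‖v‖) :=
      mul_le_mul_of_nonneg_left hWv (by positivity)
    calc ‖v‖ ^ 2 ≤ (L : ℝ) * ‖W v‖ + (μ * ⟪x - q, v⟫ + μ / 2 * 0 * ‖v‖ ^ 2) := hfinal
      _ = (L : ℝ) * ‖W v‖ + μ * ⟪x - q, v⟫ := by ring
      _ ≤ (L : ℝ) * (M * ‖x - q‖ * ‖v‖) + μ * (‖x - q‖ * ‖v‖) :=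
          add_le_add h3 (mul_le_mul_of_nonneg_left hinner hμpos.le)
      _ = ((L : ℝ) * M + μ) * ‖x - q‖ * ‖v‖ := by ring
  have hvpos : 0 < ‖v‖ := norm_pos_iff.mpr hv0
  rw [sq] at hchain
  exact le_of_mul_le_mul_right hchain hvpos
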